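/- Let ψ be an Orlicz function with convex conjugate ψ*, and define the Amemiya norm ‖X‖_{ψ*}^A = inf_{t>0} (1 + E[ψ*(t|X|)])/t. Then inf_{t>0} (n + ψ*(t))/t = ψ⁻¹(n) for every positive integer n, where ψ⁻¹(y) = inf{s ≥ 0 : ψ(s) > y}. -/

import Mathlib

open MeasureTheory Set ENNReal

/-- `ψ` is an Orlicz function. -/
def IsOrlicz (ψ : ℝ → ℝ≥0∞) : Prop :=
  ψ 0 = 0 ∧
  (∀ u ∈ Set.Ici (0:ℝ), ∀ v ∈ Set.Ici (0:ℝ), ∀ c d : ℝ, 0 ≤ c → 0 ≤ d → c + d = 1 →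
    ψ (c * u + d * v) ≤ ENNReal.ofReal c * ψ u + ENNReal.ofReal d * ψ v) ∧
  (∃ x : ℝ, 0 < x ∧ ψ x ≠ 0) ∧ (∃ x : ℝ, 0 < x ∧ ψ x ≠ ∞)

/-- The convex conjugate `ψ*(u) = sup_{v ≥ 0} (uv - ψ(v))`. -/
noncomputable def orliczConj (ψ : ℝ → ℝ≥0∞) (u : ℝ) : ℝ≥0∞ :=
  ⨆ (v : ℝ) (_ : 0 ≤ v), (ENNReal.ofReal (u * v) - ψ v)


lemma orlicz_mono {ψ : ℝ → ℝ≥0∞} (hψ : IsOrlicz ψ) {u v : ℝ} (hu : 0 ≤ u) (huv : u ≤ v) :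
    ψ u ≤ ψ v := by
  obtain ⟨h0, hconv, -, -⟩ := hψ
  rcases eq_or_lt_of_le (hu.trans huv) with hv | hv
  · have hu0 : u = 0 := le_antisymm (huv.trans hv.ge) hu
    rw [hu0, ← hv]
  · have key := hconv v (Set.mem_Ici.mpr hv.le) 0 (Set.mem_Ici.mpr le_rfl) (u/v) (1 - u/v)
      (div_nonneg hu hv.le) (by
        have : u / v ≤ 1 := div_le_one_of_le₀ huv hv.le
        linarith) (by ring)
    rw [h0, mul_zero, add_zero, mul_zero, add_zero] at key
    have huv' : u / v * v = u := div_mul_cancel₀ u hv.ne'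
    rw [huv'] at key
    calc ψ u ≤ ENNReal.ofReal (u/v) * ψ v := key
      _ ≤ 1 * ψ v := mul_le_mul_left
          (ENNReal.ofReal_le_one.mpr (div_le_one_of_le₀ huv hv.le)) _
      _ = ψ v := one_mul _

lemma extract_real {x y z : ℝ≥0∞} {c d : ℝ} (hc : 0 ≤ c) (hd : 0 ≤ d)
    (hy : y ≠ ∞) (hz : z ≠ ∞)
    (h : x ≤ ENNReal.ofReal c * y + ENNReal.ofReal d * z) :
    x.toReal ≤ c * y.toReal + d * z.toReal := by
  have hfin : ENNReal.ofReal c * y + ENNReal.ofReal d * z ≠ ∞ :=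
    ENNReal.add_ne_top.mpr ⟨ENNReal.mul_ne_top ENNReal.ofReal_ne_top hy,
      ENNReal.mul_ne_top ENNReal.ofReal_ne_top hz⟩
  have := ENNReal.toReal_mono hfin h
  rwa [ENNReal.toReal_add (ENNReal.mul_ne_top ENNReal.ofReal_ne_top hy)
      (ENNReal.mul_ne_top ENNReal.ofReal_ne_top hz),
    ENNReal.toReal_mul, ENNReal.toReal_mul, ENNReal.toReal_ofReal hc,
    ENNReal.toReal_ofReal hd] at this

/-- The secant line through `(b1, ψ b1)` and `(b2, ψ b2)` lies below `ψ` outside `(b1,b2)`. -/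
lemma orlicz_secant {ψ : ℝ → ℝ≥0∞} (hψ : IsOrlicz ψ) {b1 b2 v : ℝ}
    (hb1 : 0 < b1) (h12 : b1 < b2) (hv : 0 ≤ v) (hout : v ≤ b1 ∨ b2 ≤ v)
    (hF1 : ψ b1 ≠ ∞) (hF2 : ψ b2 ≠ ∞) :
    ENNReal.ofReal ((ψ b1).toReal +
      ((ψ b2).toReal - (ψ b1).toReal) / (b2 - b1) * (v - b1)) ≤ ψ v := by
  have hconv := hψ.2.1
  rcases eq_or_ne (ψ v) ∞ with htop | htop
  · rw [htop]; exact le_top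
  set P := (ψ b1).toReal with hP
  set Q := (ψ b2).toReal with hQ
  set V := (ψ v).toReal with hV
  have hd1 : (0:ℝ) < b2 - b1 := by linarith
  have hvpsi : ψ v = ENNReal.ofReal V := (ENNReal.ofReal_toReal htop).symm
  rw [hvpsi]
  apply ENNReal.ofReal_le_ofReal
  rcases hout with hle | hge
  · rcases eq_or_lt_of_le hle with heq | hlt
    · have : ψ v = ψ b1 := by rw [heq]
      have hPV : P = V := by rw [hP, hV, this]
      rw [heq]
      simp [hPV]
    · have hd2 : (0:ℝ) < b2 - v := by linarith
      have hc : (0:ℝ) ≤ (b2 - b1)/(b2 - v) := by positivity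
      have hd : (0:ℝ) ≤ (b1 - v)/(b2 - v) := div_nonneg (by linarith) hd2.le
      have hsum : (b2 - b1)/(b2 - v) + (b1 - v)/(b2 - v) = 1 := by field_simp; ring
      have hpt : (b2 - b1)/(b2 - v) * v + (b1 - v)/(b2 - v) * b2 = b1 := by
        field_simp; ring
      have key0 := hconv v (Set.mem_Ici.mpr hv) b2 (Set.mem_Ici.mpr (hb1.le.trans h12.le))
        ((b2 - b1)/(b2 - v)) ((b1 - v)/(b2 - v)) hc hd hsum
      rw [hpt] at key0
      have key := extract_real hc hd htop hF2 key0
      rw [← hP, ← hQ, ← hV] at key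
      rw [div_mul_eq_mul_div, div_mul_eq_mul_div, ← add_div,
        le_div_iff₀ hd2] at key
      rw [div_mul_eq_mul_div, add_div' _ _ _ hd1.ne', div_le_iff₀ hd1]
      nlinarith [key]
  · rcases eq_or_lt_of_le hge with heq | hlt
    · have : ψ v = ψ b2 := by rw [← heq]
      have hQV : Q = V := by rw [hQ, hV, this]
      rw [← heq, hQV]
      field_simp
      linarith
    · have hd2 : (0:ℝ) < v - b1 := by linarith
      have hc : (0:ℝ) ≤ (v - b2)/(v - b1) := div_nonneg (by linarith) hd2.le
      have hd : (0:ℝ) ≤ (b2 - b1)/(v - b1) := div_nonneg hd1.le hd2.le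
      have hsum : (v - b2)/(v - b1) + (b2 - b1)/(v - b1) = 1 := by field_simp; ring
      have hpt : (v - b2)/(v - b1) * b1 + (b2 - b1)/(v - b1) * v = b2 := by
        field_simp; ring
      have key0 := hconv b1 (Set.mem_Ici.mpr hb1.le) v (Set.mem_Ici.mpr hv)
        ((v - b2)/(v - b1)) ((b2 - b1)/(v - b1)) hc hd hsum
      rw [hpt] at key0
      have key := extract_real hc hd hF1 htop key0
      rw [← hP, ← hQ, ← hV] at key
      rw [div_mul_eq_mul_div, div_mul_eq_mul_div, ← add_div,
        le_div_iff₀ hd2] at key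
      rw [div_mul_eq_mul_div, add_div' _ _ _ hd1.ne', div_le_iff₀ hd1]
      nlinarith [key]

/-- `inf_{t>0} (n + ψ*(t))/t = ψ⁻¹(n)` where `ψ⁻¹(y) = inf {s ≥ 0 : ψ(s) > y}`. -/
theorem stmt9 (ψ : ℝ → ℝ≥0∞) (hψ : IsOrlicz ψ) (n : ℕ) (hn : 0 < n) :
    (⨅ (t : ℝ) (_ : 0 < t), ((n : ℝ≥0∞) + orliczConj ψ t) / ENNReal.ofReal t) =
      ENNReal.ofReal (sInf {s : ℝ | 0 ≤ s ∧ (n : ℝ≥0∞) < ψ s}) := by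
  have hnR : (0:ℝ) < n := Nat.cast_pos.mpr hn
  set S : Set ℝ := {s : ℝ | 0 ≤ s ∧ (n : ℝ≥0∞) < ψ s} with hSdef
  -- S is nonempty
  have hSne : S.Nonempty := by
    obtain ⟨x0, hx0, hx0ne⟩ := hψ.2.2.1
    rcases eq_or_ne (ψ x0) ∞ with htop | htop
    · exact ⟨x0, hx0.le, htop ▸ (ENNReal.natCast_lt_top n)⟩
    · set r := (ψ x0).toReal with hr
      have hr0 : 0 < r := ENNReal.toReal_pos hx0ne htop
      set s := x0 * ((n + 1)/r + 1) with hs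
      have hxs : x0 ≤ s := by
        have h1 : (0:ℝ) ≤ (n + 1)/r := by positivity
        nlinarith
      refine ⟨s, by positivity, ?_⟩
      by_contra hcon
      push_neg at hcon
      -- ψ x0 ≤ ofReal (x0/s) * ψ s ≤ ofReal (x0/s * n)
      have hscale : ψ x0 ≤ ENNReal.ofReal (x0/s) * ψ s := by
        have hs0 : (0:ℝ) < s := by positivity
        have key := hψ.2.1 s (Set.mem_Ici.mpr hs0.le) 0 (Set.mem_Ici.mpr le_rfl)
          (x0/s) (1 - x0/s) (by positivity)
          (by have : x0/s ≤ 1 := div_le_one_of_le₀ hxs hs0.le; linarith) (by ring)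
        rw [hψ.1, mul_zero, add_zero, mul_zero, add_zero,
          div_mul_cancel₀ x0 hs0.ne'] at key
        exact key
      have h2 : ψ x0 ≤ ENNReal.ofReal (x0/s * n) := by
        calc ψ x0 ≤ ENNReal.ofReal (x0/s) * ψ s := hscale
          _ ≤ ENNReal.ofReal (x0/s) * (n : ℝ≥0∞) := mul_le_mul_right hcon _
          _ = ENNReal.ofReal (x0/s * n) := by
              rw [← ENNReal.ofReal_natCast n, ← ENNReal.ofReal_mul (by positivity)]
      have h3 : r ≤ x0/s * n := by
        have := ENNReal.toReal_mono ENNReal.ofReal_ne_top h2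
        rwa [ENNReal.toReal_ofReal (by positivity), ← hr] at this
      have hs0 : (0:ℝ) < s := by positivity
      rw [div_mul_eq_mul_div, le_div_iff₀ hs0] at h3
      -- r * s ≤ x0 * n, but r * s = x0*(n+1) + r*x0 > x0*n
      have : r * s = x0 * (n + 1) + r * x0 := by
        rw [hs]; field_simp
      nlinarith
  have hSbd : BddBelow S := ⟨0, fun s hs => hs.1⟩
  set a := sInf S with ha
  have ha0 : 0 ≤ a := le_csInf hSne (fun s hs => hs.1)
  have hlt : ∀ v, 0 ≤ v → v < a → ψ v ≤ (n : ℝ≥0∞) := by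
    intro v hv hva
    by_contra h
    push_neg at h
    exact absurd (csInf_le hSbd ⟨hv, h⟩) (not_le.mpr hva)
  have hgt : ∀ b, a < b → (n : ℝ≥0∞) < ψ b := by
    intro b hb
    obtain ⟨s, hsS, hsb⟩ := exists_lt_of_csInf_lt hSne hb
    exact hsS.2.trans_le (orlicz_mono hψ hsS.1 hsb.le)
  refine le_antisymm ?_ ?_
  · -- LHS ≤ ofReal a
    have main : ∀ c, a < c → (⨅ (t : ℝ) (_ : 0 < t),
        ((n : ℝ≥0∞) + orliczConj ψ t) / ENNReal.ofReal t) ≤ ENNReal.ofReal c := by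
      intro c hc
      have hc0 : 0 < c := lt_of_le_of_lt ha0 hc
      obtain ⟨t, ht, hn_ct, hkey⟩ : ∃ t, 0 < t ∧ (n:ℝ) ≤ c * t ∧
          ∀ v, 0 ≤ v → ENNReal.ofReal (t * v) ≤ ENNReal.ofReal (c * t - n) + ψ v := by
        by_cases hinf : ∃ b, a < b ∧ b < c ∧ ψ b = ∞
        · obtain ⟨b, hab, hbc, hbtop⟩ := hinf
          have hb0 : 0 ≤ b := ha0.trans hab.le
          have hcb : (0:ℝ) < c - b := by linarith
          refine ⟨n / (c - b), by positivity, ?_, ?_⟩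
          · have e0 : c * ((n:ℝ) / (c - b)) = c * n / (c - b) := by ring
            rw [e0, le_div_iff₀ hcb]
            nlinarith
          · intro v hv
            rcases le_or_gt b v with hbv | hvb
            · have : ψ v = ∞ := eq_top_iff.mpr (hbtop ▸ orlicz_mono hψ hb0 hbv)
              rw [this]; simp
            · refine le_trans (ENNReal.ofReal_le_ofReal ?_) le_self_add
              rw [div_mul_eq_mul_div]
              rw [le_sub_iff_add_le, ← sub_nonneg]
              have e1 : c * (n / (c - b)) - (n * v / (c - b) + n)
                  = n * (b - v) / (c - b) := by field_simp; ring
              rw [e1]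
              exact div_nonneg (mul_nonneg hnR.le (by linarith)) hcb.le
        · push_neg at hinf
          set b1 := a + (c - a)/3 with hb1def
          set b2 := a + 2*(c - a)/3 with hb2def
          have hab1 : a < b1 := by rw [hb1def]; linarith
          have h12 : b1 < b2 := by rw [hb1def, hb2def]; linarith
          have hb2c : b2 < c := by rw [hb2def]; linarith
          have hb1pos : 0 < b1 := lt_of_le_of_lt ha0 hab1
          have hF1 : ψ b1 ≠ ∞ := hinf b1 hab1 (h12.trans hb2c)
          have hF2 : ψ b2 ≠ ∞ := hinf b2 (hab1.trans h12) hb2c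
          set P := (ψ b1).toReal with hPdef
          set Q := (ψ b2).toReal with hQdef
          set t0 := (Q - P)/(b2 - b1) with ht0def
          have hnP : (n:ℝ) < P := by
            have := hgt b1 hab1
            rw [← ENNReal.ofReal_natCast, ← ENNReal.ofReal_toReal hF1] at this
            exact_mod_cast (ENNReal.ofReal_lt_ofReal_iff_of_nonneg (by positivity)).mp this
          -- secant at v = 0 gives P ≤ t0 * b1
          have hPt0 : P ≤ t0 * b1 := by
            have h0 := orlicz_secant hψ hb1pos h12 le_rfl (Or.inl hb1pos.le) hF1 hF2
            rw [hψ.1, ← hPdef, ← hQdef, ← ht0def, le_zero_iff, ENNReal.ofReal_eq_zero] at h0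
            nlinarith [h0]
          have ht0 : 0 < t0 := by
            rcases lt_or_ge 0 t0 with h | h
            · exact h
            · nlinarith
          have hct : (n:ℝ) ≤ c * t0 := by nlinarith
          refine ⟨t0, ht0, hct, ?_⟩
          intro v hv
          by_cases hout : v ≤ b1 ∨ b2 ≤ v
          · calc ENNReal.ofReal (t0 * v)
                ≤ ENNReal.ofReal ((c * t0 - n) + (P + t0 * (v - b1))) := by
                  apply ENNReal.ofReal_le_ofReal; nlinarith
              _ ≤ ENNReal.ofReal (c * t0 - n) + ENNReal.ofReal (P + t0 * (v - b1)) :=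
                  ENNReal.ofReal_add_le
              _ ≤ ENNReal.ofReal (c * t0 - n) + ψ v := by
                  apply add_le_add_right
                  have := orlicz_secant hψ hb1pos h12 hv hout hF1 hF2
                  rwa [← hPdef, ← hQdef, ← ht0def] at this
          · push_neg at hout
            have hvb2 : v < b2 := hout.2
            calc ENNReal.ofReal (t0 * v)
                ≤ ENNReal.ofReal ((c * t0 - n) + P) := by
                  apply ENNReal.ofReal_le_ofReal; nlinarith
              _ ≤ ENNReal.ofReal (c * t0 - n) + ENNReal.ofReal P := ENNReal.ofReal_add_le
              _ ≤ ENNReal.ofReal (c * t0 - n) + ψ v := by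
                  apply add_le_add_right
                  rw [hPdef, ENNReal.ofReal_toReal hF1]
                  exact orlicz_mono hψ hb1pos.le hout.1.le
      -- conclude using t
      refine iInf_le_of_le t (iInf_le_of_le ht ?_)
      have h1 : orliczConj ψ t ≤ ENNReal.ofReal (c * t - n) := by
        rw [orliczConj]
        refine iSup₂_le fun v hv => ?_
        rw [tsub_le_iff_right]
        exact hkey v hv
      have h2 : (n : ℝ≥0∞) + orliczConj ψ t ≤ ENNReal.ofReal (c * t) := by
        calc (n : ℝ≥0∞) + orliczConj ψ t
            ≤ ENNReal.ofReal n + ENNReal.ofReal (c * t - n) := by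
              rw [ENNReal.ofReal_natCast]; exact add_le_add_right h1 _
          _ = ENNReal.ofReal (n + (c * t - n)) :=
              (ENNReal.ofReal_add (by positivity) (by linarith)).symm
          _ = ENNReal.ofReal (c * t) := by ring_nf
      calc ((n : ℝ≥0∞) + orliczConj ψ t) / ENNReal.ofReal t
          ≤ ENNReal.ofReal (c * t) / ENNReal.ofReal t :=
            ENNReal.div_le_div_right h2 _
        _ = ENNReal.ofReal c := by
            rw [ENNReal.ofReal_mul hc0.le, mul_div_assoc,
              ENNReal.div_self (ENNReal.ofReal_pos.mpr ht).ne' ENNReal.ofReal_ne_top, mul_one]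
    refine ENNReal.le_of_forall_pos_le_add fun ε hε hfin => ?_
    calc (⨅ (t : ℝ) (_ : 0 < t), ((n : ℝ≥0∞) + orliczConj ψ t) / ENNReal.ofReal t)
        ≤ ENNReal.ofReal (a + ε) := main (a + ε) (by
          have hε' : (0:ℝ) < ε := hε
          linarith)
      _ = ENNReal.ofReal a + ENNReal.ofReal ε := ENNReal.ofReal_add ha0 ε.2
      _ = ENNReal.ofReal a + ε := by rw [ENNReal.ofReal_coe_nnreal]
  · -- ofReal a ≤ LHS
    refine le_iInf fun t => le_iInf fun ht => ?_
    rw [ENNReal.le_div_iff_mul_le (Or.inl (ENNReal.ofReal_pos.mpr ht).ne')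
      (Or.inl ENNReal.ofReal_ne_top)]
    rw [← ENNReal.ofReal_mul ha0]
    rcases eq_or_ne (orliczConj ψ t) ∞ with htop | htop
    · rw [htop]; simp
    · have hfin : (n : ℝ≥0∞) + orliczConj ψ t ≠ ∞ :=
        ENNReal.add_ne_top.mpr ⟨ENNReal.natCast_ne_top n, htop⟩
      set M := ((n : ℝ≥0∞) + orliczConj ψ t).toReal with hM
      have hMeq : (n : ℝ≥0∞) + orliczConj ψ t = ENNReal.ofReal M :=
        (ENNReal.ofReal_toReal hfin).symm
      rw [hMeq]
      apply ENNReal.ofReal_le_ofReal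
      have hM0 : 0 ≤ M := ENNReal.toReal_nonneg
      have key : ∀ v, 0 ≤ v → v < a → v * t ≤ M := by
        intro v hv hva
        have hY : ENNReal.ofReal (t * v) - ψ v ≤ orliczConj ψ t := by
          rw [orliczConj]
          exact le_iSup₂ (f := fun (v : ℝ) (_ : (0:ℝ) ≤ v) => ENNReal.ofReal (t * v) - ψ v) v hv
        have h3 : ENNReal.ofReal (t * v) ≤ (n : ℝ≥0∞) + orliczConj ψ t := by
          calc ENNReal.ofReal (t * v) ≤ ψ v + (ENNReal.ofReal (t * v) - ψ v) := le_add_tsub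
            _ ≤ (n : ℝ≥0∞) + orliczConj ψ t := add_le_add (hlt v hv hva) hY
        rw [hMeq] at h3
        have := (ENNReal.ofReal_le_ofReal_iff hM0).mp h3
        linarith [this]
      rcases le_or_gt a 0 with h0 | h0
      · have : a = 0 := le_antisymm h0 ha0
        rw [this]; simpa using hM0
      · by_contra hcon
        push_neg at hcon
        have hMt : M / t < a := by
          rw [div_lt_iff₀ ht]; linarith
        set v := max 0 ((M/t + a)/2) with hvdef
        have hv0 : 0 ≤ v := le_max_left _ _
        have hva : v < a := by
          rw [hvdef]
          apply max_lt h0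
          have : M/t < a := hMt
          linarith
        have hvM : M < v * t := by
          have h4 : M/t < v := lt_of_lt_of_le (by linarith) (le_max_right _ _)
          rw [div_lt_iff₀ ht] at h4
          linarith
        exact absurd (key v hv0 hva) (not_le.mpr hvM)
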